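/- Let V : ℝ^m → ℝ be differentiable and convex, Λ : ℝⁿ → ℝ^m with Λ(x) = (½ xᵀ A₁ x, …, ½ xᵀ A_m x) for symmetric matrices A_k, Q(x) = ½ xᵀ C x + fᵀx with C symmetric, and Π(x) = V(Λ(x)) − Q(x). If ζ̄ = ∇V(Λ(x̄)) and G(ζ̄) := Σ_k ζ̄_k A_k − C satisfies G(ζ̄) x̄ = f and G(ζ̄) is positive definite, then x̄ is a global minimizer of Π on ℝⁿ. -/

import Mathlib

open Matrix

/-- Gradient inequality for differentiable convex functions. -/
lemma grad_ineq_aux {E : Type*} [NormedAddCommGroup E] [NormedSpace ℝ E]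
    (V : E → ℝ) (hd : Differentiable ℝ V) (hc : ConvexOn ℝ Set.univ V)
    (a b : E) : fderiv ℝ V a (b - a) ≤ V b - V a := by
  set g : ℝ → ℝ := fun t => V (a + t • (b - a)) with hg
  have hline : ∀ t : ℝ, HasDerivAt (fun t : ℝ => a + t • (b - a)) (b - a) t := by
    intro t
    simpa using ((hasDerivAt_id t).smul_const (b - a)).const_add a
  have hgd : ∀ t : ℝ, HasDerivAt g (fderiv ℝ V (a + t • (b - a)) (b - a)) t := by
    intro t
    exact ((hd _).hasFDerivAt.comp_hasDerivAt t (hline t))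
  have hconv : ConvexOn ℝ Set.univ g := by
    have := hc.comp_affineMap (AffineMap.lineMap a b : ℝ →ᵃ[ℝ] E)
    simp only [Set.preimage_univ] at this
    have heq : g = V ∘ ⇑(AffineMap.lineMap a b : ℝ →ᵃ[ℝ] E) := by
      funext t
      simp [hg, Function.comp, AffineMap.lineMap_apply, add_comm]
    rw [heq]; exact this
  have h0 := hconv.le_slope_of_hasDerivAt (Set.mem_univ (0:ℝ)) (Set.mem_univ (1:ℝ))
    one_pos (by simpa using hgd 0)
  simp [slope_def_field, hg] at h0
  simpa [hg] using h0

lemma dot_quad_aux (n m : ℕ) (A : Fin m → Matrix (Fin n) (Fin n) ℝ) (zb : Fin m → ℝ)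
    (y : Fin n → ℝ) (Λ : (Fin n → ℝ) → (Fin m → ℝ))
    (hΛ : ∀ x k, Λ x k = (1 / 2 : ℝ) * (x ⬝ᵥ (A k).mulVec x)) :
    zb ⬝ᵥ Λ y = (1/2 : ℝ) * (y ⬝ᵥ (∑ k, zb k • A k) *ᵥ y) := by
  simp only [dotProduct, hΛ, mulVec, Finset.sum_apply, Pi.smul_apply, smul_eq_mul,
    Finset.sum_mul, Finset.mul_sum]
  rw [Finset.sum_comm]
  apply Finset.sum_congr rfl; intro k _
  rw [Finset.sum_comm]
  apply Finset.sum_congr rfl; intro i _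
  simp only [Matrix.sum_apply, Pi.smul_apply, smul_eq_mul, Finset.sum_mul, Finset.mul_sum]
  apply Finset.sum_congr rfl; intro x _
  simp only [Matrix.smul_apply, smul_eq_mul]; ring

/-- Min-max (global optimality) part of canonical duality: if `zb = ∇V(Λ(xb))`,
`G(zb) = Σ_k zb_k A_k − C` satisfies `G(zb) xb = f` and `G(zb) ≻ 0`, then `xb` is a
global minimizer of `Pi(x) = V(Λ(x)) − (½ xᵀCx + fᵀx)` on `ℝⁿ`. -/
theorem global_min_of_canonical (n m : ℕ)
    (A : Fin m → Matrix (Fin n) (Fin n) ℝ) (hA : ∀ k, (A k).IsHermitian)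
    (C : Matrix (Fin n) (Fin n) ℝ) (hC : C.IsHermitian) (f : Fin n → ℝ)
    (V : (Fin m → ℝ) → ℝ) (hVdiff : Differentiable ℝ V)
    (hVconv : ConvexOn ℝ Set.univ V)
    (Λ : (Fin n → ℝ) → (Fin m → ℝ))
    (hΛ : ∀ x k, Λ x k = (1 / 2 : ℝ) * (x ⬝ᵥ (A k).mulVec x))
    (Q : (Fin n → ℝ) → ℝ)
    (hQ : ∀ x, Q x = (1 / 2 : ℝ) * (x ⬝ᵥ C.mulVec x) + f ⬝ᵥ x)
    (Pi : (Fin n → ℝ) → ℝ) (hPi : ∀ x, Pi x = V (Λ x) - Q x)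
    (xb : Fin n → ℝ) (zb : Fin m → ℝ)
    (hgrad : ∀ v, fderiv ℝ V (Λ xb) v = zb ⬝ᵥ v)
    (G : Matrix (Fin n) (Fin n) ℝ) (hGdef : G = ∑ k, zb k • A k - C)
    (hstat : G.mulVec xb = f) (hGpos : G.PosDef) :
    ∀ x, Pi xb ≤ Pi x := by
  intro x
  -- G is symmetric
  have hGH : G.IsHermitian := by
    rw [hGdef]
    refine IsHermitian.sub ?_ hC
    apply Finset.sum_induction _ _ (fun a b ha hb => ha.add hb) isHermitian_zero
    intro k _
    show (zb k • A k)ᴴ = zb k • A k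
    rw [conjTranspose_smul, star_trivial, (hA k).eq]
  have hswap : ∀ u v : Fin n → ℝ, u ⬝ᵥ G *ᵥ v = v ⬝ᵥ G *ᵥ u := by
    intro u v
    rw [dotProduct_mulVec, ← mulVec_transpose]
    nth_rewrite 2 [← hGH.eq]
    rw [conjTranspose_eq_transpose_of_trivial, dotProduct_comm]
  have hGC : (∑ k, zb k • A k) = G + C := by rw [hGdef, sub_add_cancel]
  have hS : ∀ y : Fin n → ℝ,
      zb ⬝ᵥ Λ y = (1/2 : ℝ) * (y ⬝ᵥ G *ᵥ y + y ⬝ᵥ C *ᵥ y) := by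
    intro y
    rw [dot_quad_aux n m A zb y Λ hΛ, hGC, add_mulVec, dotProduct_add]
  have hf : ∀ y : Fin n → ℝ, f ⬝ᵥ y = xb ⬝ᵥ G *ᵥ y := by
    intro y
    rw [← hstat, dotProduct_comm, hswap]
  have hexp : (x - xb) ⬝ᵥ G *ᵥ (x - xb)
      = x ⬝ᵥ G *ᵥ x - 2 * (xb ⬝ᵥ G *ᵥ x) + xb ⬝ᵥ G *ᵥ xb := by
    have h1 : x ⬝ᵥ G *ᵥ xb = xb ⬝ᵥ G *ᵥ x := hswap x xb
    rw [mulVec_sub, dotProduct_sub, sub_dotProduct, sub_dotProduct, h1]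
    ring
  have hpos : 0 ≤ (x - xb) ⬝ᵥ G *ᵥ (x - xb) := by
    simpa using hGpos.posSemidef.dotProduct_mulVec_nonneg (x - xb)
  have hg := grad_ineq_aux V hVdiff hVconv (Λ xb) (Λ x)
  rw [hgrad, dotProduct_sub] at hg
  have e1 := hS x
  have e2 := hS xb
  have hfx := hf x
  have hfxb := hf xb
  rw [hPi, hPi, hQ, hQ]
  linarith [hexp ▸ hpos]
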